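/- Let f : Finset α → ℝ be a nonnegative, monotone (A ⊆ B implies f(A) ≤ f(B)), submodular set function (for all A ⊆ B and x ∉ B, f(insert x A) - f(A) ≥ f(insert x B) - f(B)) on a finite ground set with f(∅) = 0. Let k ≥ 1 and let S_0 = ∅, S_{i+1} = insert x_i S_i where at each step x_i is chosen to maximize the marginal gain f(insert x S_i) - f(S_i) over elements x of the ground set. Then for every subset O of the ground set with |O| ≤ k, f(S_k) ≥ (1 - 1/e) · f(O). -/

import Mathlib

/-- Nemhauser–Wolsey–Fisher: the greedy algorithm for maximizing a
nonnegative, monotone, submodular set function under a cardinality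
constraint `k` achieves a `(1 - 1/e)` approximation. -/
theorem greedy_submodular_one_sub_inv_e {α : Type*} [DecidableEq α]
    (V : Finset α) (f : Finset α → ℝ)
    (hnonneg : ∀ A : Finset α, 0 ≤ f A)
    (hmono : ∀ A B : Finset α, A ⊆ B → f A ≤ f B)
    (hsubmod : ∀ A B : Finset α, A ⊆ B → ∀ x ∉ B,
      f (insert x B) - f B ≤ f (insert x A) - f A)
    (hempty : f ∅ = 0)
    (k : ℕ) (hk : 1 ≤ k)
    (S : ℕ → Finset α) (x : ℕ → α)
    (hS0 : S 0 = ∅)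
    (hSsucc : ∀ i, S (i + 1) = insert (x i) (S i))
    (hx_mem : ∀ i, x i ∈ V)
    (hx_greedy : ∀ i, ∀ y ∈ V,
      f (insert y (S i)) - f (S i) ≤ f (insert (x i) (S i)) - f (S i)) :
    ∀ O : Finset α, O ⊆ V → O.card ≤ k → f (S k) ≥ (1 - 1 / Real.exp 1) * f O := by
  intro O hOV hOk
  have hkpos : (0:ℝ) < k := by exact_mod_cast hk
  -- telescoping/submodularity bound
  have key : ∀ (A B : Finset α),
      f (A ∪ B) - f B ≤ ∑ y ∈ A \ B, (f (insert y B) - f B) := by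
    intro A
    induction A using Finset.induction_on with
    | empty => intro B; simp
    | @insert a A ha ih =>
      intro B
      by_cases hb : a ∈ B
      · have h1 : insert a A ∪ B = A ∪ B := by
          rw [Finset.insert_union,
            Finset.insert_eq_self.mpr (Finset.mem_union_right _ hb)]
        have h2 : insert a A \ B = A \ B := Finset.insert_sdiff_of_mem _ hb
        rw [h1, h2]; exact ih B
      · have hnot : a ∉ A ∪ B := by simp [ha, hb]
        have h1 : insert a A ∪ B = insert a (A ∪ B) := Finset.insert_union _ _ _
        have h2 : insert a A \ B = insert a (A \ B) :=
          Finset.insert_sdiff_of_notMem _ hb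
        have hna : a ∉ A \ B := fun h => ha (Finset.mem_sdiff.mp h).1
        rw [h1, h2, Finset.sum_insert hna]
        have hsub := hsubmod B (A ∪ B) Finset.subset_union_right a hnot
        have := ih B
        linarith
  -- per-step recursion
  have step : ∀ i, f O - f (S (i+1)) ≤ (1 - 1/(k:ℝ)) * (f O - f (S i)) := by
    intro i
    set δ := f (S (i+1)) - f (S i) with hδ
    have hδ0 : 0 ≤ δ := by
      have : f (S i) ≤ f (insert (x i) (S i)) :=
        hmono _ _ (Finset.subset_insert _ _)
      rw [hδ, hSsucc i]; linarith
    have hgain : ∀ y ∈ O \ S i, f (insert y (S i)) - f (S i) ≤ δ := by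
      intro y hy
      have hyV : y ∈ V := hOV (Finset.mem_sdiff.mp hy).1
      have := hx_greedy i y hyV
      rw [hδ, hSsucc i]; linarith
    have hsum : ∑ y ∈ O \ S i, (f (insert y (S i)) - f (S i)) ≤ (O \ S i).card • δ :=
      Finset.sum_le_card_nsmul _ _ _ hgain
    have hcard : ((O \ S i).card : ℝ) ≤ (k:ℝ) := by
      exact_mod_cast le_trans (Finset.card_le_card (Finset.sdiff_subset)) hOk
    have hO1 : f O ≤ f (O ∪ S i) := hmono _ _ Finset.subset_union_left
    have hO2 := key O (S i)
    have hsum' : ((O \ S i).card : ℝ) • δ ≤ (k:ℝ) * δ := by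
      rw [smul_eq_mul]; exact mul_le_mul_of_nonneg_right hcard hδ0
    have hmain : f O - f (S i) ≤ (k:ℝ) * δ := by
      have hns : ((O \ S i).card • δ : ℝ) = ((O \ S i).card : ℝ) * δ := by
        simp [nsmul_eq_mul]
      nlinarith [hsum, hO1, hO2]
    have hdiv : (f O - f (S i)) / (k:ℝ) ≤ δ := by
      rw [div_le_iff₀ hkpos]; nlinarith [hmain]
    have hring : (1 - 1/(k:ℝ)) * (f O - f (S i))
        = (f O - f (S i)) - (f O - f (S i)) / (k:ℝ) := by
      field_simp
    rw [hring]
    linarith [hdiv, hδ]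
  -- iterate
  have hc0 : (0:ℝ) ≤ 1 - 1/(k:ℝ) := by
    have : 1/(k:ℝ) ≤ 1 := by
      rw [div_le_one hkpos]; exact_mod_cast hk
    linarith
  have hiter : ∀ i, f O - f (S i) ≤ (1 - 1/(k:ℝ))^i * f O := by
    intro i
    induction i with
    | zero => simp [hS0, hempty]
    | succ n ih =>
      calc f O - f (S (n+1)) ≤ (1 - 1/(k:ℝ)) * (f O - f (S n)) := step n
        _ ≤ (1 - 1/(k:ℝ)) * ((1 - 1/(k:ℝ))^n * f O) :=
            mul_le_mul_of_nonneg_left ih hc0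
        _ = (1 - 1/(k:ℝ))^(n+1) * f O := by ring
  have hexp : (1 - 1/(k:ℝ))^k ≤ 1 / Real.exp 1 := by
    have h1 : 1 - 1/(k:ℝ) ≤ Real.exp (-(1/(k:ℝ))) := by
      have := Real.add_one_le_exp (-(1/(k:ℝ)))
      linarith
    have h2 : (1 - 1/(k:ℝ))^k ≤ (Real.exp (-(1/(k:ℝ))))^k :=
      pow_le_pow_left₀ hc0 h1 k
    have h3 : (Real.exp (-(1/(k:ℝ))))^k = Real.exp ((k:ℝ) * (-(1/(k:ℝ)))) := by
      rw [← Real.exp_nat_mul]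
    have h4 : (k:ℝ) * (-(1/(k:ℝ))) = -1 := by
      field_simp
    rw [h3, h4, Real.exp_neg] at h2
    simpa [one_div] using h2
  have hfin := hiter k
  have hfO : 0 ≤ f O := hnonneg O
  have : (1 - 1/(k:ℝ))^k * f O ≤ (1 / Real.exp 1) * f O :=
    mul_le_mul_of_nonneg_right hexp hfO
  linarith
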